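/- For every k ∈ ℤ_{2N}, applying to v the algebra character A → ℂ determined by K ↦ t^k yields t^{k²}; equivalently, (1/(2N)) Σ_{j,l ∈ ℤ_{2N}} t^{(l+j)l} t^{jk} = t^{k²}. (This says that v acts on the one-dimensional irreducible representation V^k of A as multiplication by t^{k²}.) -/

import Mathlib

open Finset TensorProduct

noncomputable section

/-- The quantum group `U_t(u(1)) = ℂ[ℤ_{2N}]`, the complex group algebra of the cyclic group
`ℤ_{2N}`. -/
abbrev QG (N : ℕ) := MonoidAlgebra ℂ (Multiplicative (ZMod (2 * N)))

/-- The basis element `K^j`, `j ∈ ℤ_{2N}` (`K` is the image of the fixed generator `1`). -/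
def KK (N : ℕ) (j : ZMod (2 * N)) : QG N :=
  MonoidAlgebra.single (Multiplicative.ofAdd j) 1

/-- `t = exp(πi/N)`, a primitive `2N`-th root of unity. -/
def tq (N : ℕ) : ℂ := Complex.exp ((Real.pi : ℂ) * Complex.I / N)

/-- The universal `R`-matrix `R = (1/2N) Σ_{j,k ∈ ℤ_{2N}} t^{−jk} K^j ⊗ K^k`. -/
def Rmat (N : ℕ) : QG N ⊗[ℂ] QG N :=
  (2 * (N : ℂ))⁻¹ • ∑ j ∈ Finset.range (2 * N), ∑ k ∈ Finset.range (2 * N),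
    tq N ^ (-((j : ℤ) * (k : ℤ))) • (KK N (j : ZMod (2 * N)) ⊗ₜ[ℂ] KK N (k : ZMod (2 * N)))

/-- The twist `v` acts on `V^k` as multiplication by `t^{k²}`: applying the character
`K ↦ t^k` to `v` yields `t^{k²}`; equivalently,
`(1/2N) Σ_{j,l ∈ ℤ_{2N}} t^{(l+j)l} t^{jk} = t^{k²}` (for every integer choice of the
exponent `k`, which is equivalent since `t^{2N} = 1`). -/
theorem stmt_14 (N : ℕ) (hpos : 0 < N) (hN : Even N) (k : ℤ) :
    (2 * (N : ℂ))⁻¹ * ∑ j ∈ Finset.range (2 * N), ∑ l ∈ Finset.range (2 * N),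
        tq N ^ (((l : ℤ) + (j : ℤ)) * (l : ℤ)) * tq N ^ ((j : ℤ) * k)
      = tq N ^ (k ^ 2) := by
  have hN0 : (N : ℂ) ≠ 0 := Nat.cast_ne_zero.mpr hpos.ne'
  have h2N0 : (2 * (N:ℤ)) ≠ 0 := by positivity
  have h2Npos : (0:ℤ) < 2 * N := by positivity
  set t := tq N with ht
  have ht_ne : t ≠ 0 := Complex.exp_ne_zero _
  have hπ : (Real.pi : ℂ) * Complex.I ≠ 0 :=
    mul_ne_zero (Complex.ofReal_ne_zero.mpr Real.pi_ne_zero) Complex.I_ne_zero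
  have hprim : ∀ m : ℤ, t ^ m = 1 ↔ (2 * (N:ℤ)) ∣ m := by
    intro m
    rw [ht, tq, ← Complex.exp_int_mul, Complex.exp_eq_one_iff]
    constructor
    · rintro ⟨n, hn⟩
      refine ⟨n, ?_⟩
      field_simp at hn
      have h2 : (m : ℂ) * ((Real.pi : ℂ) * Complex.I)
          = ((2 * (N:ℤ) * n : ℤ) : ℂ) * ((Real.pi : ℂ) * Complex.I) := by
        push_cast
        linear_combination ((Real.pi : ℂ) * Complex.I) * hn
      exact_mod_cast mul_right_cancel₀ hπ h2
    · rintro ⟨n, hn⟩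
      refine ⟨n, ?_⟩
      rw [hn]
      push_cast
      field_simp
  -- geometric sum
  have key : ∀ l : ℕ, ∑ j ∈ Finset.range (2*N),
      t ^ (((l : ℤ) + (j : ℤ)) * (l : ℤ)) * t ^ ((j : ℤ) * k)
      = t ^ ((l:ℤ)^2) * (if t ^ ((l:ℤ) + k) = 1 then (2*N : ℂ) else 0) := by
    intro l
    have hrw : ∀ j : ℕ, t ^ (((l : ℤ) + (j : ℤ)) * (l : ℤ)) * t ^ ((j : ℤ) * k)
        = t ^ ((l:ℤ)^2) * (t ^ ((l:ℤ) + k)) ^ j := by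
      intro j
      rw [← zpow_natCast (t ^ ((l:ℤ) + k)) j, ← zpow_mul, ← zpow_add₀ ht_ne, ← zpow_add₀ ht_ne]
      congr 1
      ring
    rw [Finset.sum_congr rfl fun j _ => hrw j, ← Finset.mul_sum]
    congr 1
    by_cases h1 : t ^ ((l:ℤ) + k) = 1
    · simp [h1]
    · rw [if_neg h1, geom_sum_eq h1]
      have : (t ^ ((l:ℤ) + k)) ^ (2*N) = 1 := by
        rw [← zpow_natCast, ← zpow_mul]
        refine (hprim _).mpr ⟨(l:ℤ) + k, ?_⟩
        push_cast; ring
      rw [this]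
      simp
  rw [Finset.sum_comm, Finset.sum_congr rfl fun l _ => key l]
  set l₀ : ℕ := ((-k) % (2 * (N:ℤ))).toNat with hl₀def
  have hl₀ : (l₀ : ℤ) = (-k) % (2 * (N:ℤ)) :=
    Int.toNat_of_nonneg (Int.emod_nonneg _ h2N0)
  have hl₀mem : l₀ ∈ Finset.range (2 * N) := by
    rw [Finset.mem_range]
    have := Int.emod_lt_of_pos (-k) h2Npos
    rw [← hl₀] at this
    exact_mod_cast this
  have hdvd : (2 * (N:ℤ)) ∣ (l₀ : ℤ) + k := by
    apply Int.dvd_of_emod_eq_zero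
    rw [hl₀, Int.emod_add_emod]
    simp
  rw [Finset.sum_eq_single_of_mem l₀ hl₀mem ?uniq]
  · rw [(hprim _).mpr hdvd, if_pos rfl]
    have hsq : t ^ ((l₀:ℤ)^2) = t ^ (k^2) := by
      have h := (hprim ((l₀:ℤ)^2 - k^2)).mpr (by
        have : (l₀:ℤ)^2 - k^2 = ((l₀:ℤ) + k) * ((l₀:ℤ) - k) := by ring
        rw [this]; exact hdvd.mul_right _)
      rw [zpow_sub₀ ht_ne, div_eq_one_iff_eq (zpow_ne_zero _ ht_ne)] at h
      exact h
    rw [hsq]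
    have h2Nc : (2 * (N:ℂ)) ≠ 0 := mul_ne_zero two_ne_zero hN0
    field_simp
  case uniq =>
    intro l hl hne
    have hlt : (l:ℤ) < 2 * N := by
      rw [Finset.mem_range] at hl; exact_mod_cast hl
    rw [if_neg, mul_zero]
    intro h1
    obtain ⟨c, hc⟩ := (hprim _).mp h1
    have hlc : (l:ℤ) = -k + (2 * (N:ℤ)) * c := by linarith [hc]
    have : (l:ℤ) % (2 * (N:ℤ)) = (-k) % (2 * (N:ℤ)) := by
      rw [hlc, Int.add_mul_emod_self_left]
    rw [Int.emod_eq_of_lt (by positivity) hlt] at this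
    rw [← hl₀] at this
    exact hne (by exact_mod_cast this)
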